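/- If X ∈ ℝ⁸ with X ≠ 0, then the twistor vectors X_0, …, X_7 form an orthogonal basis of ℝ⁸, and the elements ι(X_0), …, ι(X_7) generate Cl₈ as an ℝ-algebra (the subalgebra of Cl₈ generated by {ι(X_i) : i = 0,…,7} is all of Cl₈). -/

import Mathlib

noncomputable section

open scoped Quaternion TensorProduct

/-- The octonions, realized as the Cayley–Dickson double of the quaternions. -/
def Oct : Type := ℍ × ℍ

namespace Oct

instance : AddCommGroup Oct := inferInstanceAs (AddCommGroup (ℍ × ℍ))
instance : Module ℝ Oct := inferInstanceAs (Module ℝ (ℍ × ℍ))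

/-- First (quaternionic) component. -/
def x (p : Oct) : ℍ := Prod.fst p
/-- Second (quaternionic) component. -/
def y (p : Oct) : ℍ := Prod.snd p
/-- Build an octonion from two quaternions. -/
def mk (a b : ℍ) : Oct := ((a, b) : ℍ × ℍ)

@[simp] lemma x_mk (a b : ℍ) : (mk a b).x = a := rfl
@[simp] lemma y_mk (a b : ℍ) : (mk a b).y = b := rfl
@[simp] lemma x_add (p q : Oct) : (p + q).x = p.x + q.x := rfl
@[simp] lemma y_add (p q : Oct) : (p + q).y = p.y + q.y := rfl
@[simp] lemma x_smul (r : ℝ) (p : Oct) : (r • p).x = r • p.x := rfl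
@[simp] lemma y_smul (r : ℝ) (p : Oct) : (r • p).y = r • p.y := rfl
@[simp] lemma x_zero : (0 : Oct).x = 0 := rfl
@[simp] lemma y_zero : (0 : Oct).y = 0 := rfl

@[ext] lemma ext {p q : Oct} (h1 : p.x = q.x) (h2 : p.y = q.y) : p = q :=
  Prod.ext h1 h2

/-- Cayley–Dickson multiplication: `(a,b)·(c,d) = (a·c − conj(d)·b, d·a + b·conj(c))`. -/
instance : Mul Oct :=
  ⟨fun p q => mk (p.x * q.x - star q.y * p.y) (q.y * p.x + p.y * star q.x)⟩

instance : One Oct := ⟨mk 1 0⟩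

@[simp] lemma x_mul (p q : Oct) : (p * q).x = p.x * q.x - star q.y * p.y := rfl
@[simp] lemma y_mul (p q : Oct) : (p * q).y = q.y * p.x + p.y * star q.x := rfl
@[simp] lemma x_one : (1 : Oct).x = 1 := rfl
@[simp] lemma y_one : (1 : Oct).y = 0 := rfl

instance : NonUnitalNonAssocRing Oct :=
  { (inferInstance : AddCommGroup Oct) with
    mul := (· * ·)
    left_distrib := by
      intro p q r
      refine ext ?_ ?_ <;>
        simp only [x_mul, y_mul, x_add, y_add, star_add] <;> noncomm_ring
    right_distrib := by
      intro p q r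
      refine ext ?_ ?_ <;>
        simp only [x_mul, y_mul, x_add, y_add, star_add] <;> noncomm_ring
    zero_mul := by
      intro p
      refine ext ?_ ?_ <;> simp only [x_mul, y_mul, x_zero, y_zero, star_zero] <;> simp
    mul_zero := by
      intro p
      refine ext ?_ ?_ <;> simp only [x_mul, y_mul, x_zero, y_zero, star_zero] <;> simp }

instance : SMulCommClass ℝ Oct Oct where
  smul_comm r p q := by
    show r • (p * q) = p * (r • q)
    refine ext ?_ ?_ <;>
      simp [x_mul, y_mul, smul_sub, smul_add, mul_smul_comm, smul_mul_assoc,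
        star_smul, star_trivial]

instance : IsScalarTower ℝ Oct Oct where
  smul_assoc r p q := by
    show (r • p) * q = r • (p * q)
    refine ext ?_ ?_ <;>
      simp [x_mul, y_mul, smul_sub, smul_add, mul_smul_comm, smul_mul_assoc,
        star_smul, star_trivial]

/-- Octonionic conjugation: `conj (a,b) = (conj a, −b)`. -/
def conj (p : Oct) : Oct := mk (star p.x) (-p.y)

/-- The real part of an octonion. -/
def re (p : Oct) : ℝ := p.x.re

/-- The standard basis `e_0, …, e_7` of the octonions. -/
def e : Fin 8 → Oct :=
  ![mk 1 0, mk ⟨0, 1, 0, 0⟩ 0, mk ⟨0, 0, 1, 0⟩ 0, mk ⟨0, 0, 0, 1⟩ 0,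
    mk 0 1, mk 0 ⟨0, 1, 0, 0⟩, mk 0 ⟨0, 0, 1, 0⟩, mk 0 ⟨0, 0, 0, 1⟩]

/-- The real coordinates of an octonion with respect to the standard basis. -/
def coord : Fin 8 → Oct → ℝ :=
  ![fun p => p.x.re, fun p => p.x.imI, fun p => p.x.imJ, fun p => p.x.imK,
    fun p => p.y.re, fun p => p.y.imI, fun p => p.y.imJ, fun p => p.y.imK]

lemma coord_add (j : Fin 8) (p q : Oct) :
    coord j (p + q) = coord j p + coord j q := by fin_cases j <;> rfl

lemma coord_smul (j : Fin 8) (r : ℝ) (p : Oct) :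
    coord j (r • p) = r * coord j p := by fin_cases j <;> rfl

/-- The binary "dot product" `⟨i,j⟩ = i₁j₁ + i₂j₂ + i₃j₃` of binary digits. -/
def bdot (i j : Fin 8) : ℕ :=
  ((i.val.testBit 0 && j.val.testBit 0).toNat +
   (i.val.testBit 1 && j.val.testBit 1).toNat +
   (i.val.testBit 2 && j.val.testBit 2).toNat) % 2

/-- The involution `J_i`, the ℝ-linear map determined by `J_i(e_j) = (−1)^{⟨i,j⟩} e_j`. -/
def J (i : Fin 8) : Oct →ₗ[ℝ] Oct where
  toFun p := ∑ j : Fin 8, ((-1 : ℝ) ^ bdot i j * coord j p) • e j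
  map_add' p q := by
    simp only [coord_add, mul_add, add_smul]
    rw [Finset.sum_add_distrib]
  map_smul' r p := by
    simp only [coord_smul, RingHom.id_apply, Finset.smul_sum, smul_smul, mul_left_comm]

/-- The sign `σ(j,i)` defined by `J_j(conj e_i) = (−1)^{σ(j,i)} e_i`. -/
def sigma (j i : Fin 8) : ℕ := if i = 0 then 0 else (bdot j i + 1) % 2

end Oct
namespace Oct

@[simp] lemma e_0 : e 0 = mk 1 0 := rfl
@[simp] lemma e_1 : e 1 = mk ⟨0, 1, 0, 0⟩ 0 := rfl
@[simp] lemma e_2 : e 2 = mk ⟨0, 0, 1, 0⟩ 0 := rfl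
@[simp] lemma e_3 : e 3 = mk ⟨0, 0, 0, 1⟩ 0 := rfl
@[simp] lemma e_4 : e 4 = mk 0 1 := rfl
@[simp] lemma e_5 : e 5 = mk 0 ⟨0, 1, 0, 0⟩ := rfl
@[simp] lemma e_6 : e 6 = mk 0 ⟨0, 0, 1, 0⟩ := rfl
@[simp] lemma e_7 : e 7 = mk 0 ⟨0, 0, 0, 1⟩ := rfl

@[simp] lemma coord_0 (p : Oct) : coord 0 p = p.x.re := rfl
@[simp] lemma coord_1 (p : Oct) : coord 1 p = p.x.imI := rfl
@[simp] lemma coord_2 (p : Oct) : coord 2 p = p.x.imJ := rfl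
@[simp] lemma coord_3 (p : Oct) : coord 3 p = p.x.imK := rfl
@[simp] lemma coord_4 (p : Oct) : coord 4 p = p.y.re := rfl
@[simp] lemma coord_5 (p : Oct) : coord 5 p = p.y.imI := rfl
@[simp] lemma coord_6 (p : Oct) : coord 6 p = p.y.imJ := rfl
@[simp] lemma coord_7 (p : Oct) : coord 7 p = p.y.imK := rfl

lemma coord_e (l m : Fin 8) : coord l (e m) = if l = m then 1 else 0 := by
  fin_cases l <;> fin_cases m <;> rfl

lemma sum_coord_smul_e (p : Oct) : ∑ l : Fin 8, coord l p • e l = p := by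
  have hc : ∀ c : Fin 8, coord c (∑ l : Fin 8, coord l p • e l) = coord c p := by
    intro c
    simp only [Fin.sum_univ_eight, coord_add, coord_smul, coord_e]
    fin_cases c <;> simp
  refine ext ?_ ?_ <;> ext
  exacts [hc 0, hc 1, hc 2, hc 3, hc 4, hc 5, hc 6, hc 7]

end Oct

/-- The ℝ-linear isomorphism `Φ : ℝ⁸ → 𝕆` with `Φ(b_l) = e_l`. -/
def Phi : EuclideanSpace ℝ (Fin 8) ≃ₗ[ℝ] Oct where
  toFun v := ∑ l : Fin 8, v l • Oct.e l
  map_add' u v := by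
    simp only [PiLp.add_apply, add_smul]
    rw [Finset.sum_add_distrib]
  map_smul' r v := by
    simp only [PiLp.smul_apply, smul_eq_mul, RingHom.id_apply, Finset.smul_sum, smul_smul]
  invFun p := (WithLp.toLp 2 (fun l => Oct.coord l p) : EuclideanSpace ℝ (Fin 8))
  left_inv v := by
    ext l
    fin_cases l <;>
      simp only [Fin.sum_univ_eight, Oct.coord_add, Oct.coord_smul, Oct.coord_e] <;> simp
  right_inv p := Oct.sum_coord_smul_e p

/-- The quadratic form `Q(v) = −‖v‖²` on ℝ⁸. -/
def Q8 : QuadraticForm ℝ (EuclideanSpace ℝ (Fin 8)) :=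
  - LinearMap.BilinMap.toQuadraticMap
      (innerₗ (EuclideanSpace ℝ (Fin 8)) : LinearMap.BilinForm ℝ (EuclideanSpace ℝ (Fin 8)))

/-- The Clifford algebra `Cl₈` of `Q(v) = −‖v‖²` on ℝ⁸. -/
abbrev Cl8 := CliffordAlgebra Q8

/-- The Clifford generators `g_l := ι(b_l)`. -/
def g (l : Fin 8) : Cl8 := CliffordAlgebra.ι Q8 (EuclideanSpace.single l 1)

/-- The extension `J_j ⊗ id` of `J_j` to `𝕆 ⊗ Cl₈`. -/
def JT (j : Fin 8) : Oct ⊗[ℝ] Cl8 →ₗ[ℝ] Oct ⊗[ℝ] Cl8 :=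
  TensorProduct.map (Oct.J j) LinearMap.id

/-- The element `Ω := Σᵢ conj(eᵢ) ⊗ gᵢ` of `𝕆 ⊗ Cl₈`. -/
def Omega : Oct ⊗[ℝ] Cl8 := ∑ i : Fin 8, (Oct.e i).conj ⊗ₜ[ℝ] g i

/-- The octonionic Witt basis `f_j := (J_j ⊗ id)(Ω)`. -/
def f (j : Fin 8) : Oct ⊗[ℝ] Cl8 := JT j Omega

/-- The twistor vectors `X_i := Φ⁻¹(Φ(X)·conj(e_i))`. -/
def Xtw (X : EuclideanSpace ℝ (Fin 8)) (i : Fin 8) : EuclideanSpace ℝ (Fin 8) :=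
  Phi.symm (Phi X * (Oct.e i).conj)

/-- The Hermitian variables `Z_j := (J_j ⊗ id)(Ω·(Φ(X) ⊗ 1))`. -/
def Z (X : EuclideanSpace ℝ (Fin 8)) (j : Fin 8) : Oct ⊗[ℝ] Cl8 :=
  JT j (Omega * (Phi X ⊗ₜ[ℝ] (1 : Cl8)))


open scoped RealInnerProductSpace

lemma Phi_x (X : EuclideanSpace ℝ (Fin 8)) : (Phi X).x = ⟨X 0, X 1, X 2, X 3⟩ := by
  have h : ∀ l, Oct.coord l (Phi X) = X l := fun l =>
    congrArg (fun v : EuclideanSpace ℝ (Fin 8) => v l) (Phi.symm_apply_apply X)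
  exact Quaternion.ext _ _ (h 0) (h 1) (h 2) (h 3)

lemma Phi_y (X : EuclideanSpace ℝ (Fin 8)) : (Phi X).y = ⟨X 4, X 5, X 6, X 7⟩ := by
  have h : ∀ l, Oct.coord l (Phi X) = X l := fun l =>
    congrArg (fun v : EuclideanSpace ℝ (Fin 8) => v l) (Phi.symm_apply_apply X)
  exact Quaternion.ext _ _ (h 4) (h 5) (h 6) (h 7)

lemma Xtw_apply (X : EuclideanSpace ℝ (Fin 8)) (i l : Fin 8) :
    Xtw X i l = Oct.coord l (Phi X * (Oct.e i).conj) := rfl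

lemma Oct_conj_comps (i : Fin 8) :
    (Oct.e i).conj.x.re = ![1, 0, 0, 0, 0, 0, 0, 0] i ∧
    (Oct.e i).conj.x.imI = -![0, 1, 0, 0, 0, 0, 0, 0] i ∧
    (Oct.e i).conj.x.imJ = -![0, 0, 1, 0, 0, 0, 0, 0] i ∧
    (Oct.e i).conj.x.imK = -![0, 0, 0, 1, 0, 0, 0, 0] i ∧
    (Oct.e i).conj.y.re = -![0, 0, 0, 0, 1, 0, 0, 0] i ∧
    (Oct.e i).conj.y.imI = -![0, 0, 0, 0, 0, 1, 0, 0] i ∧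
    (Oct.e i).conj.y.imJ = -![0, 0, 0, 0, 0, 0, 1, 0] i ∧
    (Oct.e i).conj.y.imK = -![0, 0, 0, 0, 0, 0, 0, 1] i := by
  refine ⟨(Quaternion.re_star _).trans ?_, ?_, ?_, ?_, ?_, ?_, ?_, ?_⟩ <;> fin_cases i <;> rfl

lemma Phi_comps (X : EuclideanSpace ℝ (Fin 8)) :
    (Phi X).x.re = X 0 ∧ (Phi X).x.imI = X 1 ∧ (Phi X).x.imJ = X 2 ∧ (Phi X).x.imK = X 3 ∧
    (Phi X).y.re = X 4 ∧ (Phi X).y.imI = X 5 ∧ (Phi X).y.imJ = X 6 ∧ (Phi X).y.imK = X 7 := by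
  have h : ∀ l, Oct.coord l (Phi X) = X l := fun l =>
    congrArg (fun v : EuclideanSpace ℝ (Fin 8) => v l) (Phi.symm_apply_apply X)
  exact ⟨h 0, h 1, h 2, h 3, h 4, h 5, h 6, h 7⟩


set_option maxHeartbeats 1000000 in
lemma key_0_0 (X : EuclideanSpace ℝ (Fin 8)) :
    ⟪Xtw X 0, Xtw X 0⟫ = ⟪X, X⟫ := by
  simp [PiLp.inner_apply, RCLike.inner_apply, Fin.sum_univ_eight, Xtw_apply, Oct_conj_comps,
    Phi_comps, Quaternion.re_mul, Quaternion.imI_mul, Quaternion.imJ_mul,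
    Quaternion.imK_mul, -Oct.e_0, -Oct.e_1, -Oct.e_2, -Oct.e_3, -Oct.e_4, -Oct.e_5, -Oct.e_6,
    -Oct.e_7, -inner_self_eq_norm_sq_to_K] <;> ring


set_option maxHeartbeats 1000000 in
lemma key_0_1 (X : EuclideanSpace ℝ (Fin 8)) :
    ⟪Xtw X 0, Xtw X 1⟫ = 0 := by
  simp [PiLp.inner_apply, RCLike.inner_apply, Fin.sum_univ_eight, Xtw_apply, Oct_conj_comps,
    Phi_comps, Quaternion.re_mul, Quaternion.imI_mul, Quaternion.imJ_mul,
    Quaternion.imK_mul, -Oct.e_0, -Oct.e_1, -Oct.e_2, -Oct.e_3, -Oct.e_4, -Oct.e_5, -Oct.e_6,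
    -Oct.e_7, -inner_self_eq_norm_sq_to_K] <;> ring


set_option maxHeartbeats 1000000 in
lemma key_0_2 (X : EuclideanSpace ℝ (Fin 8)) :
    ⟪Xtw X 0, Xtw X 2⟫ = 0 := by
  simp [PiLp.inner_apply, RCLike.inner_apply, Fin.sum_univ_eight, Xtw_apply, Oct_conj_comps,
    Phi_comps, Quaternion.re_mul, Quaternion.imI_mul, Quaternion.imJ_mul,
    Quaternion.imK_mul, -Oct.e_0, -Oct.e_1, -Oct.e_2, -Oct.e_3, -Oct.e_4, -Oct.e_5, -Oct.e_6,
    -Oct.e_7, -inner_self_eq_norm_sq_to_K] <;> ring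


set_option maxHeartbeats 1000000 in
lemma key_0_3 (X : EuclideanSpace ℝ (Fin 8)) :
    ⟪Xtw X 0, Xtw X 3⟫ = 0 := by
  simp [PiLp.inner_apply, RCLike.inner_apply, Fin.sum_univ_eight, Xtw_apply, Oct_conj_comps,
    Phi_comps, Quaternion.re_mul, Quaternion.imI_mul, Quaternion.imJ_mul,
    Quaternion.imK_mul, -Oct.e_0, -Oct.e_1, -Oct.e_2, -Oct.e_3, -Oct.e_4, -Oct.e_5, -Oct.e_6,
    -Oct.e_7, -inner_self_eq_norm_sq_to_K] <;> ring


set_option maxHeartbeats 1000000 in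
lemma key_0_4 (X : EuclideanSpace ℝ (Fin 8)) :
    ⟪Xtw X 0, Xtw X 4⟫ = 0 := by
  simp [PiLp.inner_apply, RCLike.inner_apply, Fin.sum_univ_eight, Xtw_apply, Oct_conj_comps,
    Phi_comps, Quaternion.re_mul, Quaternion.imI_mul, Quaternion.imJ_mul,
    Quaternion.imK_mul, -Oct.e_0, -Oct.e_1, -Oct.e_2, -Oct.e_3, -Oct.e_4, -Oct.e_5, -Oct.e_6,
    -Oct.e_7, -inner_self_eq_norm_sq_to_K] <;> ring


set_option maxHeartbeats 1000000 in
lemma key_0_5 (X : EuclideanSpace ℝ (Fin 8)) :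
    ⟪Xtw X 0, Xtw X 5⟫ = 0 := by
  simp [PiLp.inner_apply, RCLike.inner_apply, Fin.sum_univ_eight, Xtw_apply, Oct_conj_comps,
    Phi_comps, Quaternion.re_mul, Quaternion.imI_mul, Quaternion.imJ_mul,
    Quaternion.imK_mul, -Oct.e_0, -Oct.e_1, -Oct.e_2, -Oct.e_3, -Oct.e_4, -Oct.e_5, -Oct.e_6,
    -Oct.e_7, -inner_self_eq_norm_sq_to_K] <;> ring


set_option maxHeartbeats 1000000 in
lemma key_0_6 (X : EuclideanSpace ℝ (Fin 8)) :
    ⟪Xtw X 0, Xtw X 6⟫ = 0 := by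
  simp [PiLp.inner_apply, RCLike.inner_apply, Fin.sum_univ_eight, Xtw_apply, Oct_conj_comps,
    Phi_comps, Quaternion.re_mul, Quaternion.imI_mul, Quaternion.imJ_mul,
    Quaternion.imK_mul, -Oct.e_0, -Oct.e_1, -Oct.e_2, -Oct.e_3, -Oct.e_4, -Oct.e_5, -Oct.e_6,
    -Oct.e_7, -inner_self_eq_norm_sq_to_K] <;> ring


set_option maxHeartbeats 1000000 in
lemma key_0_7 (X : EuclideanSpace ℝ (Fin 8)) :
    ⟪Xtw X 0, Xtw X 7⟫ = 0 := by
  simp [PiLp.inner_apply, RCLike.inner_apply, Fin.sum_univ_eight, Xtw_apply, Oct_conj_comps,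
    Phi_comps, Quaternion.re_mul, Quaternion.imI_mul, Quaternion.imJ_mul,
    Quaternion.imK_mul, -Oct.e_0, -Oct.e_1, -Oct.e_2, -Oct.e_3, -Oct.e_4, -Oct.e_5, -Oct.e_6,
    -Oct.e_7, -inner_self_eq_norm_sq_to_K] <;> ring


set_option maxHeartbeats 1000000 in
lemma key_1_1 (X : EuclideanSpace ℝ (Fin 8)) :
    ⟪Xtw X 1, Xtw X 1⟫ = ⟪X, X⟫ := by
  simp [PiLp.inner_apply, RCLike.inner_apply, Fin.sum_univ_eight, Xtw_apply, Oct_conj_comps,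
    Phi_comps, Quaternion.re_mul, Quaternion.imI_mul, Quaternion.imJ_mul,
    Quaternion.imK_mul, -Oct.e_0, -Oct.e_1, -Oct.e_2, -Oct.e_3, -Oct.e_4, -Oct.e_5, -Oct.e_6,
    -Oct.e_7, -inner_self_eq_norm_sq_to_K] <;> ring


set_option maxHeartbeats 1000000 in
lemma key_1_2 (X : EuclideanSpace ℝ (Fin 8)) :
    ⟪Xtw X 1, Xtw X 2⟫ = 0 := by
  simp [PiLp.inner_apply, RCLike.inner_apply, Fin.sum_univ_eight, Xtw_apply, Oct_conj_comps,
    Phi_comps, Quaternion.re_mul, Quaternion.imI_mul, Quaternion.imJ_mul,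
    Quaternion.imK_mul, -Oct.e_0, -Oct.e_1, -Oct.e_2, -Oct.e_3, -Oct.e_4, -Oct.e_5, -Oct.e_6,
    -Oct.e_7, -inner_self_eq_norm_sq_to_K] <;> ring


set_option maxHeartbeats 1000000 in
lemma key_1_3 (X : EuclideanSpace ℝ (Fin 8)) :
    ⟪Xtw X 1, Xtw X 3⟫ = 0 := by
  simp [PiLp.inner_apply, RCLike.inner_apply, Fin.sum_univ_eight, Xtw_apply, Oct_conj_comps,
    Phi_comps, Quaternion.re_mul, Quaternion.imI_mul, Quaternion.imJ_mul,
    Quaternion.imK_mul, -Oct.e_0, -Oct.e_1, -Oct.e_2, -Oct.e_3, -Oct.e_4, -Oct.e_5, -Oct.e_6,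
    -Oct.e_7, -inner_self_eq_norm_sq_to_K] <;> ring


set_option maxHeartbeats 1000000 in
lemma key_1_4 (X : EuclideanSpace ℝ (Fin 8)) :
    ⟪Xtw X 1, Xtw X 4⟫ = 0 := by
  simp [PiLp.inner_apply, RCLike.inner_apply, Fin.sum_univ_eight, Xtw_apply, Oct_conj_comps,
    Phi_comps, Quaternion.re_mul, Quaternion.imI_mul, Quaternion.imJ_mul,
    Quaternion.imK_mul, -Oct.e_0, -Oct.e_1, -Oct.e_2, -Oct.e_3, -Oct.e_4, -Oct.e_5, -Oct.e_6,
    -Oct.e_7, -inner_self_eq_norm_sq_to_K] <;> ring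


set_option maxHeartbeats 1000000 in
lemma key_1_5 (X : EuclideanSpace ℝ (Fin 8)) :
    ⟪Xtw X 1, Xtw X 5⟫ = 0 := by
  simp [PiLp.inner_apply, RCLike.inner_apply, Fin.sum_univ_eight, Xtw_apply, Oct_conj_comps,
    Phi_comps, Quaternion.re_mul, Quaternion.imI_mul, Quaternion.imJ_mul,
    Quaternion.imK_mul, -Oct.e_0, -Oct.e_1, -Oct.e_2, -Oct.e_3, -Oct.e_4, -Oct.e_5, -Oct.e_6,
    -Oct.e_7, -inner_self_eq_norm_sq_to_K] <;> ring


set_option maxHeartbeats 1000000 in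
lemma key_1_6 (X : EuclideanSpace ℝ (Fin 8)) :
    ⟪Xtw X 1, Xtw X 6⟫ = 0 := by
  simp [PiLp.inner_apply, RCLike.inner_apply, Fin.sum_univ_eight, Xtw_apply, Oct_conj_comps,
    Phi_comps, Quaternion.re_mul, Quaternion.imI_mul, Quaternion.imJ_mul,
    Quaternion.imK_mul, -Oct.e_0, -Oct.e_1, -Oct.e_2, -Oct.e_3, -Oct.e_4, -Oct.e_5, -Oct.e_6,
    -Oct.e_7, -inner_self_eq_norm_sq_to_K] <;> ring


set_option maxHeartbeats 1000000 in
lemma key_1_7 (X : EuclideanSpace ℝ (Fin 8)) :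
    ⟪Xtw X 1, Xtw X 7⟫ = 0 := by
  simp [PiLp.inner_apply, RCLike.inner_apply, Fin.sum_univ_eight, Xtw_apply, Oct_conj_comps,
    Phi_comps, Quaternion.re_mul, Quaternion.imI_mul, Quaternion.imJ_mul,
    Quaternion.imK_mul, -Oct.e_0, -Oct.e_1, -Oct.e_2, -Oct.e_3, -Oct.e_4, -Oct.e_5, -Oct.e_6,
    -Oct.e_7, -inner_self_eq_norm_sq_to_K] <;> ring


set_option maxHeartbeats 1000000 in
lemma key_2_2 (X : EuclideanSpace ℝ (Fin 8)) :
    ⟪Xtw X 2, Xtw X 2⟫ = ⟪X, X⟫ := by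
  simp [PiLp.inner_apply, RCLike.inner_apply, Fin.sum_univ_eight, Xtw_apply, Oct_conj_comps,
    Phi_comps, Quaternion.re_mul, Quaternion.imI_mul, Quaternion.imJ_mul,
    Quaternion.imK_mul, -Oct.e_0, -Oct.e_1, -Oct.e_2, -Oct.e_3, -Oct.e_4, -Oct.e_5, -Oct.e_6,
    -Oct.e_7, -inner_self_eq_norm_sq_to_K] <;> ring


set_option maxHeartbeats 1000000 in
lemma key_2_3 (X : EuclideanSpace ℝ (Fin 8)) :
    ⟪Xtw X 2, Xtw X 3⟫ = 0 := by
  simp [PiLp.inner_apply, RCLike.inner_apply, Fin.sum_univ_eight, Xtw_apply, Oct_conj_comps,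
    Phi_comps, Quaternion.re_mul, Quaternion.imI_mul, Quaternion.imJ_mul,
    Quaternion.imK_mul, -Oct.e_0, -Oct.e_1, -Oct.e_2, -Oct.e_3, -Oct.e_4, -Oct.e_5, -Oct.e_6,
    -Oct.e_7, -inner_self_eq_norm_sq_to_K] <;> ring


set_option maxHeartbeats 1000000 in
lemma key_2_4 (X : EuclideanSpace ℝ (Fin 8)) :
    ⟪Xtw X 2, Xtw X 4⟫ = 0 := by
  simp [PiLp.inner_apply, RCLike.inner_apply, Fin.sum_univ_eight, Xtw_apply, Oct_conj_comps,
    Phi_comps, Quaternion.re_mul, Quaternion.imI_mul, Quaternion.imJ_mul,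
    Quaternion.imK_mul, -Oct.e_0, -Oct.e_1, -Oct.e_2, -Oct.e_3, -Oct.e_4, -Oct.e_5, -Oct.e_6,
    -Oct.e_7, -inner_self_eq_norm_sq_to_K] <;> ring


set_option maxHeartbeats 1000000 in
lemma key_2_5 (X : EuclideanSpace ℝ (Fin 8)) :
    ⟪Xtw X 2, Xtw X 5⟫ = 0 := by
  simp [PiLp.inner_apply, RCLike.inner_apply, Fin.sum_univ_eight, Xtw_apply, Oct_conj_comps,
    Phi_comps, Quaternion.re_mul, Quaternion.imI_mul, Quaternion.imJ_mul,
    Quaternion.imK_mul, -Oct.e_0, -Oct.e_1, -Oct.e_2, -Oct.e_3, -Oct.e_4, -Oct.e_5, -Oct.e_6,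
    -Oct.e_7, -inner_self_eq_norm_sq_to_K] <;> ring


set_option maxHeartbeats 1000000 in
lemma key_2_6 (X : EuclideanSpace ℝ (Fin 8)) :
    ⟪Xtw X 2, Xtw X 6⟫ = 0 := by
  simp [PiLp.inner_apply, RCLike.inner_apply, Fin.sum_univ_eight, Xtw_apply, Oct_conj_comps,
    Phi_comps, Quaternion.re_mul, Quaternion.imI_mul, Quaternion.imJ_mul,
    Quaternion.imK_mul, -Oct.e_0, -Oct.e_1, -Oct.e_2, -Oct.e_3, -Oct.e_4, -Oct.e_5, -Oct.e_6,
    -Oct.e_7, -inner_self_eq_norm_sq_to_K] <;> ring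


set_option maxHeartbeats 1000000 in
lemma key_2_7 (X : EuclideanSpace ℝ (Fin 8)) :
    ⟪Xtw X 2, Xtw X 7⟫ = 0 := by
  simp [PiLp.inner_apply, RCLike.inner_apply, Fin.sum_univ_eight, Xtw_apply, Oct_conj_comps,
    Phi_comps, Quaternion.re_mul, Quaternion.imI_mul, Quaternion.imJ_mul,
    Quaternion.imK_mul, -Oct.e_0, -Oct.e_1, -Oct.e_2, -Oct.e_3, -Oct.e_4, -Oct.e_5, -Oct.e_6,
    -Oct.e_7, -inner_self_eq_norm_sq_to_K] <;> ring


set_option maxHeartbeats 1000000 in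
lemma key_3_3 (X : EuclideanSpace ℝ (Fin 8)) :
    ⟪Xtw X 3, Xtw X 3⟫ = ⟪X, X⟫ := by
  simp [PiLp.inner_apply, RCLike.inner_apply, Fin.sum_univ_eight, Xtw_apply, Oct_conj_comps,
    Phi_comps, Quaternion.re_mul, Quaternion.imI_mul, Quaternion.imJ_mul,
    Quaternion.imK_mul, -Oct.e_0, -Oct.e_1, -Oct.e_2, -Oct.e_3, -Oct.e_4, -Oct.e_5, -Oct.e_6,
    -Oct.e_7, -inner_self_eq_norm_sq_to_K] <;> ring


set_option maxHeartbeats 1000000 in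
lemma key_3_4 (X : EuclideanSpace ℝ (Fin 8)) :
    ⟪Xtw X 3, Xtw X 4⟫ = 0 := by
  simp [PiLp.inner_apply, RCLike.inner_apply, Fin.sum_univ_eight, Xtw_apply, Oct_conj_comps,
    Phi_comps, Quaternion.re_mul, Quaternion.imI_mul, Quaternion.imJ_mul,
    Quaternion.imK_mul, -Oct.e_0, -Oct.e_1, -Oct.e_2, -Oct.e_3, -Oct.e_4, -Oct.e_5, -Oct.e_6,
    -Oct.e_7, -inner_self_eq_norm_sq_to_K] <;> ring


set_option maxHeartbeats 1000000 in
lemma key_3_5 (X : EuclideanSpace ℝ (Fin 8)) :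
    ⟪Xtw X 3, Xtw X 5⟫ = 0 := by
  simp [PiLp.inner_apply, RCLike.inner_apply, Fin.sum_univ_eight, Xtw_apply, Oct_conj_comps,
    Phi_comps, Quaternion.re_mul, Quaternion.imI_mul, Quaternion.imJ_mul,
    Quaternion.imK_mul, -Oct.e_0, -Oct.e_1, -Oct.e_2, -Oct.e_3, -Oct.e_4, -Oct.e_5, -Oct.e_6,
    -Oct.e_7, -inner_self_eq_norm_sq_to_K] <;> ring


set_option maxHeartbeats 1000000 in
lemma key_3_6 (X : EuclideanSpace ℝ (Fin 8)) :
    ⟪Xtw X 3, Xtw X 6⟫ = 0 := by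
  simp [PiLp.inner_apply, RCLike.inner_apply, Fin.sum_univ_eight, Xtw_apply, Oct_conj_comps,
    Phi_comps, Quaternion.re_mul, Quaternion.imI_mul, Quaternion.imJ_mul,
    Quaternion.imK_mul, -Oct.e_0, -Oct.e_1, -Oct.e_2, -Oct.e_3, -Oct.e_4, -Oct.e_5, -Oct.e_6,
    -Oct.e_7, -inner_self_eq_norm_sq_to_K] <;> ring


set_option maxHeartbeats 1000000 in
lemma key_3_7 (X : EuclideanSpace ℝ (Fin 8)) :
    ⟪Xtw X 3, Xtw X 7⟫ = 0 := by
  simp [PiLp.inner_apply, RCLike.inner_apply, Fin.sum_univ_eight, Xtw_apply, Oct_conj_comps,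
    Phi_comps, Quaternion.re_mul, Quaternion.imI_mul, Quaternion.imJ_mul,
    Quaternion.imK_mul, -Oct.e_0, -Oct.e_1, -Oct.e_2, -Oct.e_3, -Oct.e_4, -Oct.e_5, -Oct.e_6,
    -Oct.e_7, -inner_self_eq_norm_sq_to_K] <;> ring


set_option maxHeartbeats 1000000 in
lemma key_4_4 (X : EuclideanSpace ℝ (Fin 8)) :
    ⟪Xtw X 4, Xtw X 4⟫ = ⟪X, X⟫ := by
  simp [PiLp.inner_apply, RCLike.inner_apply, Fin.sum_univ_eight, Xtw_apply, Oct_conj_comps,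
    Phi_comps, Quaternion.re_mul, Quaternion.imI_mul, Quaternion.imJ_mul,
    Quaternion.imK_mul, -Oct.e_0, -Oct.e_1, -Oct.e_2, -Oct.e_3, -Oct.e_4, -Oct.e_5, -Oct.e_6,
    -Oct.e_7, -inner_self_eq_norm_sq_to_K] <;> ring


set_option maxHeartbeats 1000000 in
lemma key_4_5 (X : EuclideanSpace ℝ (Fin 8)) :
    ⟪Xtw X 4, Xtw X 5⟫ = 0 := by
  simp [PiLp.inner_apply, RCLike.inner_apply, Fin.sum_univ_eight, Xtw_apply, Oct_conj_comps,
    Phi_comps, Quaternion.re_mul, Quaternion.imI_mul, Quaternion.imJ_mul,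
    Quaternion.imK_mul, -Oct.e_0, -Oct.e_1, -Oct.e_2, -Oct.e_3, -Oct.e_4, -Oct.e_5, -Oct.e_6,
    -Oct.e_7, -inner_self_eq_norm_sq_to_K] <;> ring


set_option maxHeartbeats 1000000 in
lemma key_4_6 (X : EuclideanSpace ℝ (Fin 8)) :
    ⟪Xtw X 4, Xtw X 6⟫ = 0 := by
  simp [PiLp.inner_apply, RCLike.inner_apply, Fin.sum_univ_eight, Xtw_apply, Oct_conj_comps,
    Phi_comps, Quaternion.re_mul, Quaternion.imI_mul, Quaternion.imJ_mul,
    Quaternion.imK_mul, -Oct.e_0, -Oct.e_1, -Oct.e_2, -Oct.e_3, -Oct.e_4, -Oct.e_5, -Oct.e_6,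
    -Oct.e_7, -inner_self_eq_norm_sq_to_K] <;> ring


set_option maxHeartbeats 1000000 in
lemma key_4_7 (X : EuclideanSpace ℝ (Fin 8)) :
    ⟪Xtw X 4, Xtw X 7⟫ = 0 := by
  simp [PiLp.inner_apply, RCLike.inner_apply, Fin.sum_univ_eight, Xtw_apply, Oct_conj_comps,
    Phi_comps, Quaternion.re_mul, Quaternion.imI_mul, Quaternion.imJ_mul,
    Quaternion.imK_mul, -Oct.e_0, -Oct.e_1, -Oct.e_2, -Oct.e_3, -Oct.e_4, -Oct.e_5, -Oct.e_6,
    -Oct.e_7, -inner_self_eq_norm_sq_to_K] <;> ring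


set_option maxHeartbeats 1000000 in
lemma key_5_5 (X : EuclideanSpace ℝ (Fin 8)) :
    ⟪Xtw X 5, Xtw X 5⟫ = ⟪X, X⟫ := by
  simp [PiLp.inner_apply, RCLike.inner_apply, Fin.sum_univ_eight, Xtw_apply, Oct_conj_comps,
    Phi_comps, Quaternion.re_mul, Quaternion.imI_mul, Quaternion.imJ_mul,
    Quaternion.imK_mul, -Oct.e_0, -Oct.e_1, -Oct.e_2, -Oct.e_3, -Oct.e_4, -Oct.e_5, -Oct.e_6,
    -Oct.e_7, -inner_self_eq_norm_sq_to_K] <;> ring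


set_option maxHeartbeats 1000000 in
lemma key_5_6 (X : EuclideanSpace ℝ (Fin 8)) :
    ⟪Xtw X 5, Xtw X 6⟫ = 0 := by
  simp [PiLp.inner_apply, RCLike.inner_apply, Fin.sum_univ_eight, Xtw_apply, Oct_conj_comps,
    Phi_comps, Quaternion.re_mul, Quaternion.imI_mul, Quaternion.imJ_mul,
    Quaternion.imK_mul, -Oct.e_0, -Oct.e_1, -Oct.e_2, -Oct.e_3, -Oct.e_4, -Oct.e_5, -Oct.e_6,
    -Oct.e_7, -inner_self_eq_norm_sq_to_K] <;> ring


set_option maxHeartbeats 1000000 in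
lemma key_5_7 (X : EuclideanSpace ℝ (Fin 8)) :
    ⟪Xtw X 5, Xtw X 7⟫ = 0 := by
  simp [PiLp.inner_apply, RCLike.inner_apply, Fin.sum_univ_eight, Xtw_apply, Oct_conj_comps,
    Phi_comps, Quaternion.re_mul, Quaternion.imI_mul, Quaternion.imJ_mul,
    Quaternion.imK_mul, -Oct.e_0, -Oct.e_1, -Oct.e_2, -Oct.e_3, -Oct.e_4, -Oct.e_5, -Oct.e_6,
    -Oct.e_7, -inner_self_eq_norm_sq_to_K] <;> ring


set_option maxHeartbeats 1000000 in
lemma key_6_6 (X : EuclideanSpace ℝ (Fin 8)) :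
    ⟪Xtw X 6, Xtw X 6⟫ = ⟪X, X⟫ := by
  simp [PiLp.inner_apply, RCLike.inner_apply, Fin.sum_univ_eight, Xtw_apply, Oct_conj_comps,
    Phi_comps, Quaternion.re_mul, Quaternion.imI_mul, Quaternion.imJ_mul,
    Quaternion.imK_mul, -Oct.e_0, -Oct.e_1, -Oct.e_2, -Oct.e_3, -Oct.e_4, -Oct.e_5, -Oct.e_6,
    -Oct.e_7, -inner_self_eq_norm_sq_to_K] <;> ring


set_option maxHeartbeats 1000000 in
lemma key_6_7 (X : EuclideanSpace ℝ (Fin 8)) :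
    ⟪Xtw X 6, Xtw X 7⟫ = 0 := by
  simp [PiLp.inner_apply, RCLike.inner_apply, Fin.sum_univ_eight, Xtw_apply, Oct_conj_comps,
    Phi_comps, Quaternion.re_mul, Quaternion.imI_mul, Quaternion.imJ_mul,
    Quaternion.imK_mul, -Oct.e_0, -Oct.e_1, -Oct.e_2, -Oct.e_3, -Oct.e_4, -Oct.e_5, -Oct.e_6,
    -Oct.e_7, -inner_self_eq_norm_sq_to_K] <;> ring


set_option maxHeartbeats 1000000 in
lemma key_7_7 (X : EuclideanSpace ℝ (Fin 8)) :
    ⟪Xtw X 7, Xtw X 7⟫ = ⟪X, X⟫ := by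
  simp [PiLp.inner_apply, RCLike.inner_apply, Fin.sum_univ_eight, Xtw_apply, Oct_conj_comps,
    Phi_comps, Quaternion.re_mul, Quaternion.imI_mul, Quaternion.imJ_mul,
    Quaternion.imK_mul, -Oct.e_0, -Oct.e_1, -Oct.e_2, -Oct.e_3, -Oct.e_4, -Oct.e_5, -Oct.e_6,
    -Oct.e_7, -inner_self_eq_norm_sq_to_K] <;> ring


lemma key (X : EuclideanSpace ℝ (Fin 8)) (i j : Fin 8) :
    ⟪Xtw X i, Xtw X j⟫ = if i = j then ⟪X, X⟫ else 0 := by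
  rcases i with ⟨iv, hi⟩
  rcases j with ⟨jv, hj⟩
  match iv, jv with
  | 0, 0 => exact key_0_0 X
  | 0, 1 => exact key_0_1 X
  | 0, 2 => exact key_0_2 X
  | 0, 3 => exact key_0_3 X
  | 0, 4 => exact key_0_4 X
  | 0, 5 => exact key_0_5 X
  | 0, 6 => exact key_0_6 X
  | 0, 7 => exact key_0_7 X
  | 1, 0 => rw [real_inner_comm]; exact key_0_1 X
  | 1, 1 => exact key_1_1 X
  | 1, 2 => exact key_1_2 X
  | 1, 3 => exact key_1_3 X
  | 1, 4 => exact key_1_4 X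
  | 1, 5 => exact key_1_5 X
  | 1, 6 => exact key_1_6 X
  | 1, 7 => exact key_1_7 X
  | 2, 0 => rw [real_inner_comm]; exact key_0_2 X
  | 2, 1 => rw [real_inner_comm]; exact key_1_2 X
  | 2, 2 => exact key_2_2 X
  | 2, 3 => exact key_2_3 X
  | 2, 4 => exact key_2_4 X
  | 2, 5 => exact key_2_5 X
  | 2, 6 => exact key_2_6 X
  | 2, 7 => exact key_2_7 X
  | 3, 0 => rw [real_inner_comm]; exact key_0_3 X
  | 3, 1 => rw [real_inner_comm]; exact key_1_3 X
  | 3, 2 => rw [real_inner_comm]; exact key_2_3 X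
  | 3, 3 => exact key_3_3 X
  | 3, 4 => exact key_3_4 X
  | 3, 5 => exact key_3_5 X
  | 3, 6 => exact key_3_6 X
  | 3, 7 => exact key_3_7 X
  | 4, 0 => rw [real_inner_comm]; exact key_0_4 X
  | 4, 1 => rw [real_inner_comm]; exact key_1_4 X
  | 4, 2 => rw [real_inner_comm]; exact key_2_4 X
  | 4, 3 => rw [real_inner_comm]; exact key_3_4 X
  | 4, 4 => exact key_4_4 X
  | 4, 5 => exact key_4_5 X
  | 4, 6 => exact key_4_6 X
  | 4, 7 => exact key_4_7 X
  | 5, 0 => rw [real_inner_comm]; exact key_0_5 X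
  | 5, 1 => rw [real_inner_comm]; exact key_1_5 X
  | 5, 2 => rw [real_inner_comm]; exact key_2_5 X
  | 5, 3 => rw [real_inner_comm]; exact key_3_5 X
  | 5, 4 => rw [real_inner_comm]; exact key_4_5 X
  | 5, 5 => exact key_5_5 X
  | 5, 6 => exact key_5_6 X
  | 5, 7 => exact key_5_7 X
  | 6, 0 => rw [real_inner_comm]; exact key_0_6 X
  | 6, 1 => rw [real_inner_comm]; exact key_1_6 X
  | 6, 2 => rw [real_inner_comm]; exact key_2_6 X
  | 6, 3 => rw [real_inner_comm]; exact key_3_6 X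
  | 6, 4 => rw [real_inner_comm]; exact key_4_6 X
  | 6, 5 => rw [real_inner_comm]; exact key_5_6 X
  | 6, 6 => exact key_6_6 X
  | 6, 7 => exact key_6_7 X
  | 7, 0 => rw [real_inner_comm]; exact key_0_7 X
  | 7, 1 => rw [real_inner_comm]; exact key_1_7 X
  | 7, 2 => rw [real_inner_comm]; exact key_2_7 X
  | 7, 3 => rw [real_inner_comm]; exact key_3_7 X
  | 7, 4 => rw [real_inner_comm]; exact key_4_7 X
  | 7, 5 => rw [real_inner_comm]; exact key_5_7 X
  | 7, 6 => rw [real_inner_comm]; exact key_6_7 X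
  | 7, 7 => exact key_7_7 X
  | iv+8, _ => exact absurd hi (by omega)
  | _, jv+8 => exact absurd hj (by omega)


open scoped RealInnerProductSpace

/-- If `X ≠ 0`, the twistor vectors `X₀, …, X₇` form an orthogonal basis
of `ℝ⁸` (pairwise orthogonal, linearly independent and spanning), and the `ι(Xᵢ)` generate
`Cl₈` as an `ℝ`-algebra. -/
theorem twistor_orthogonal_basis_and_generators (X : EuclideanSpace ℝ (Fin 8)) (hX : X ≠ 0) :
    (∀ i j : Fin 8, i ≠ j → ⟪Xtw X i, Xtw X j⟫ = 0) ∧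
    LinearIndependent ℝ (Xtw X) ∧
    Submodule.span ℝ (Set.range (Xtw X)) = ⊤ ∧
    Algebra.adjoin ℝ (Set.range fun i : Fin 8 => CliffordAlgebra.ι Q8 (Xtw X i)) = ⊤ := by

  have hXX : ⟪X, X⟫ ≠ 0 := fun h => hX (inner_self_eq_zero.mp h)
  have hn : (0:ℝ) < ⟪X, X⟫ := lt_of_le_of_ne real_inner_self_nonneg (Ne.symm hXX)
  -- orthonormal normalized family
  set c : ℝ := (Real.sqrt ⟪X, X⟫)⁻¹ with hc
  have hs : Real.sqrt ⟪X, X⟫ ≠ 0 := Real.sqrt_ne_zero'.mpr hn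
  have hcne : c ≠ 0 := inv_ne_zero hs
  have hortho : Orthonormal ℝ (fun i => c • Xtw X i) := by
    rw [orthonormal_iff_ite]
    intro i j
    rw [real_inner_smul_left, real_inner_smul_right, key]
    by_cases hij : i = j
    · simp only [hij, if_true]
      have h1 : c * Real.sqrt ⟪X, X⟫ = 1 := inv_mul_cancel₀ hs
      conv_lhs => rw [(Real.mul_self_sqrt hn.le).symm]
      rw [show ∀ a b : ℝ, a * (a * (b * b)) = (a * b) * (a * b) from fun a b => by ring]
      rw [h1, one_mul]
    · simp [hij]
  have hli : LinearIndependent ℝ (Xtw X) := by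
    have h1 := hortho.linearIndependent
    have h2 := h1.units_smul (fun _ : Fin 8 => Units.mk0 c⁻¹ (inv_ne_zero hcne))
    have : ((fun _ : Fin 8 => Units.mk0 c⁻¹ (inv_ne_zero hcne)) • fun i => c • Xtw X i) = Xtw X := by
      funext i
      show c⁻¹ • (c • Xtw X i) = Xtw X i
      rw [smul_smul, inv_mul_cancel₀ hcne, one_smul]
    rwa [this] at h2
  have hspan : Submodule.span ℝ (Set.range (Xtw X)) = ⊤ := by
    refine hli.span_eq_top_of_card_eq_finrank ?_
    simp [finrank_euclideanSpace]
  refine ⟨fun i j hij => by rw [key]; simp [hij], hli, hspan, ?_⟩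
  rw [eq_top_iff]
  rintro a -
  induction a using CliffordAlgebra.induction with
  | algebraMap r => exact Subalgebra.algebraMap_mem _ r
  | ι v =>
    have hv : v ∈ Submodule.span ℝ (Set.range (Xtw X)) := hspan ▸ Submodule.mem_top
    have h2 : CliffordAlgebra.ι Q8 v ∈
        Submodule.map (CliffordAlgebra.ι Q8) (Submodule.span ℝ (Set.range (Xtw X))) :=
      Submodule.mem_map_of_mem hv
    rw [Submodule.map_span] at h2
    have h3 : Submodule.span ℝ ((CliffordAlgebra.ι Q8) '' Set.range (Xtw X)) ≤
        Subalgebra.toSubmodule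
          (Algebra.adjoin ℝ (Set.range fun i : Fin 8 => CliffordAlgebra.ι Q8 (Xtw X i))) := by
      rw [Submodule.span_le]
      rintro _ ⟨_, ⟨i, rfl⟩, rfl⟩
      exact Algebra.subset_adjoin ⟨i, rfl⟩
    exact h3 h2
  | mul a b ha hb => exact mul_mem ha hb
  | add a b ha hb => exact add_mem ha hb
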